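/- (Ergodicity with respect to dispersive semigroups) Let Γ be a countable set, M a measurable space, and p a probability measure on M; let μ := p^{⊗Γ} be the homogeneous product measure on M^Γ. Let Π be a dispersive semigroup of injective maps Γ → Γ, i.e., for every finite J ⊆ Γ there exists π ∈ Π with π(J) ∩ J = ∅. Then μ is ergodic with respect to the induced action: every measurable set E ⊆ M^Γ satisfying, for every π ∈ Π, that a ∈ E if and only if a^π := (a_{π(k)})_{k∈Γ} ∈ E, has μ(E) ∈ {0, 1}. -/

import Mathlib

open MeasureTheory ProbabilityTheory Set
open scoped symmDiff

set_option linter.unusedSectionVars false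


open MeasureTheory ProbabilityTheory Set

section Aux
variable {M Γ : Type*} [MeasurableSpace M]

/-- Boxes: product cylinder sets. -/
def ErgAux.Box (J : Finset Γ) (B : Γ → Set M) : Set (Γ → M) := {a | ∀ k ∈ J, a k ∈ B k}

namespace ErgAux

/-- The collection of measurable boxes with coordinates in `J`. -/
def boxes (J : Finset Γ) : Set (Set (Γ → M)) :=
  {t | ∃ B : Γ → Set M, (∀ k, MeasurableSet (B k)) ∧ t = Box J B}

lemma measurableSet_box {J : Finset Γ} {B : Γ → Set M} (hB : ∀ k, MeasurableSet (B k)) :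
    MeasurableSet (Box J B) := by
  have : Box J B = ⋂ k ∈ (J : Set Γ), (fun a : Γ → M => a k) ⁻¹' B k := by
    ext a; simp [Box]
  rw [this]
  exact MeasurableSet.biInter J.countable_toSet fun k _ => measurable_pi_apply k (hB k)

lemma isPiSystem_boxes (J : Finset Γ) : IsPiSystem (boxes (M := M) J) := by
  rintro t1 ⟨B1, hB1, rfl⟩ t2 ⟨B2, hB2, rfl⟩ -
  refine ⟨fun k => B1 k ∩ B2 k, fun k => (hB1 k).inter (hB2 k), ?_⟩
  ext a
  simp only [Box, mem_inter_iff, mem_setOf_eq]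
  exact ⟨fun h k hk => ⟨h.1 k hk, h.2 k hk⟩,
    fun h => ⟨fun k hk => (h k hk).1, fun k hk => (h k hk).2⟩⟩

lemma generateFrom_boxes_le (J : Finset Γ) :
    MeasurableSpace.generateFrom (boxes (M := M) J) ≤ MeasurableSpace.pi := by
  refine MeasurableSpace.generateFrom_le ?_
  rintro t ⟨B, hB, rfl⟩
  exact measurableSet_box hB

lemma comap_le_generateFrom_boxes (J : Finset Γ) :
    MeasurableSpace.comap (J.restrict : (Γ → M) → (J → M)) MeasurableSpace.pi ≤
      MeasurableSpace.generateFrom (boxes (M := M) J) := by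
  classical
  rw [← generateFrom_pi, MeasurableSpace.comap_generateFrom]
  refine MeasurableSpace.generateFrom_le ?_
  rintro t ⟨S, ⟨u, hu, rfl⟩, rfl⟩
  refine MeasurableSpace.measurableSet_generateFrom ?_
  refine ⟨fun k => if h : k ∈ J then u ⟨k, h⟩ else Set.univ, ?_, ?_⟩
  · intro k
    by_cases h : k ∈ J
    · simpa [h] using hu ⟨k, h⟩ (Set.mem_univ _)
    · simp [h]
  · ext a
    simp only [Box, mem_preimage, mem_pi, mem_univ, forall_true_left, mem_setOf_eq]
    constructor
    · intro h k hk
      simpa [hk] using h ⟨k, hk⟩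
    · intro h j
      simpa [j.2] using h j j.2

end ErgAux
end Aux


section Aux2
variable {M Γ : Type*} [MeasurableSpace M]
namespace ErgAux2

variable (p : Measure M) [IsProbabilityMeasure p]
    (μ : Measure (Γ → M)) [IsProbabilityMeasure μ]

/-- Independence of boxes with disjoint coordinate sets. -/
lemma indepSets_boxes
    (hμ : ∀ (J : Finset Γ) (B : Γ → Set M), (∀ k, MeasurableSet (B k)) →
      μ {a | ∀ k ∈ J, a k ∈ B k} = ∏ k ∈ J, p (B k))
    {J K : Finset Γ} (hJK : Disjoint J K) :
    IndepSets {t | ∃ B : Γ → Set M, (∀ k, MeasurableSet (B k)) ∧ t = {a | ∀ k ∈ J, a k ∈ B k}}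
      {t | ∃ B : Γ → Set M, (∀ k, MeasurableSet (B k)) ∧ t = {a | ∀ k ∈ K, a k ∈ B k}} μ := by
  classical
  rintro t1 t2 ⟨B1, hB1, rfl⟩ ⟨B2, hB2, rfl⟩
  refine Filter.Eventually.of_forall fun _ => ?_
  simp only [Kernel.const_apply]
  set B : Γ → Set M := fun k => if k ∈ J then B1 k else B2 k with hB
  have hBm : ∀ k, MeasurableSet (B k) := fun k => by
    by_cases h : k ∈ J <;> simp [hB, h, hB1 k, hB2 k]
  have hset : {a : Γ → M | ∀ k ∈ J, a k ∈ B1 k} ∩ {a | ∀ k ∈ K, a k ∈ B2 k}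
      = {a | ∀ k ∈ J ∪ K, a k ∈ B k} := by
    ext a
    simp only [mem_inter_iff, mem_setOf_eq, Finset.mem_union]
    constructor
    · rintro ⟨h1, h2⟩ k hk
      rcases hk with hk | hk
      · simpa [hB, hk] using h1 k hk
      · have hkJ : k ∉ J := fun hkJ => (Finset.disjoint_left.mp hJK hkJ) hk
        simpa [hB, hkJ] using h2 k hk
    · intro h
      refine ⟨fun k hk => by simpa [hB, hk] using h k (Or.inl hk), fun k hk => ?_⟩
      have hkJ : k ∉ J := fun hkJ => (Finset.disjoint_left.mp hJK hkJ) hk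
      simpa [hB, hkJ] using h k (Or.inr hk)
  rw [hset, hμ _ _ hBm, hμ _ _ hB1, hμ _ _ hB2, Finset.prod_union hJK]
  congr 1
  · exact Finset.prod_congr rfl fun k hk => by simp [hB, hk]
  · refine Finset.prod_congr rfl fun k hk => ?_
    have hkJ : k ∉ J := fun hkJ => (Finset.disjoint_left.mp hJK hkJ) hk
    simp [hB, hkJ]

/-- The shift by an injective `π` preserves `μ`. -/
lemma map_shift_eq
    (hμ : ∀ (J : Finset Γ) (B : Γ → Set M), (∀ k, MeasurableSet (B k)) →
      μ {a | ∀ k ∈ J, a k ∈ B k} = ∏ k ∈ J, p (B k))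
    {π : Γ → Γ} (hπ : Function.Injective π) [Countable Γ] :
    μ.map (fun a k => a (π k)) = μ := by
  classical
  have hT : Measurable (fun (a : Γ → M) k => a (π k)) :=
    measurable_pi_lambda _ fun k => measurable_pi_apply (π k)
  have : IsProbabilityMeasure (μ.map (fun a k => a (π k))) :=
    Measure.isProbabilityMeasure_map hT.aemeasurable
  refine ext_of_generate_finite
    (⋃ J : Finset Γ, {t | ∃ B : Γ → Set M, (∀ k, MeasurableSet (B k)) ∧
        t = {a | ∀ k ∈ J, a k ∈ B k}}) ?_ ?_ ?_ (by simp)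
  · refine le_antisymm ?_ ?_
    · refine iSup_le fun k => ?_
      rw [← measurable_iff_comap_le]
      intro s hs
      refine MeasurableSpace.measurableSet_generateFrom ?_
      refine mem_iUnion.2 ⟨{k}, fun j => if j = k then s else Set.univ, fun j => ?_, ?_⟩
      · by_cases h : j = k <;> simp [h, hs]
      · ext a; simp
    · refine MeasurableSpace.generateFrom_le ?_
      rintro t ht
      rw [mem_iUnion] at ht
      obtain ⟨J, B, hBm, rfl⟩ := ht
      have : {a : Γ → M | ∀ k ∈ J, a k ∈ B k} = ⋂ k ∈ (J : Set Γ),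
          (fun a : Γ → M => a k) ⁻¹' B k := by ext a; simp
      rw [this]
      exact MeasurableSet.biInter J.countable_toSet fun k _ =>
        measurable_pi_apply k (hBm k)
  · rintro t1 ht1 t2 ht2 -
    rw [mem_iUnion] at ht1 ht2 ⊢
    obtain ⟨J1, B1, hB1, rfl⟩ := ht1
    obtain ⟨J2, B2, hB2, rfl⟩ := ht2
    refine ⟨J1 ∪ J2, fun k => (if k ∈ J1 then B1 k else Set.univ) ∩
      (if k ∈ J2 then B2 k else Set.univ), fun k => ?_, ?_⟩
    · refine MeasurableSet.inter ?_ ?_ <;>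
        · split_ifs with h
          · first | exact hB1 k | exact hB2 k
          · exact MeasurableSet.univ
    · ext a
      simp only [mem_inter_iff, mem_setOf_eq, Finset.mem_union]
      constructor
      · rintro ⟨h1, h2⟩ k hk
        refine ⟨?_, ?_⟩ <;> split_ifs with h
        · exact h1 k h
        · trivial
        · exact h2 k h
        · trivial
      · intro h
        constructor
        · intro k hk
          have := (h k (Or.inl hk)).1
          simpa [hk] using this
        · intro k hk
          have := (h k (Or.inr hk)).2
          simpa [hk] using this
  · rintro t ht
    rw [mem_iUnion] at ht
    obtain ⟨J, B, hBm, rfl⟩ := ht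
    set B' : Γ → Set M := fun j => if h : ∃ k ∈ J, π k = j then B h.choose else Set.univ
      with hB'
    have hB'm : ∀ j, MeasurableSet (B' j) := fun j => by
      by_cases h : ∃ k ∈ J, π k = j
      · simp only [hB', dif_pos h]; exact hBm _
      · simp only [hB', dif_neg h]; exact MeasurableSet.univ
    have hB'π : ∀ k ∈ J, B' (π k) = B k := by
      intro k hk
      have hex : ∃ k' ∈ J, π k' = π k := ⟨k, hk, rfl⟩
      simp only [hB', dif_pos hex]
      exact congrArg B (hπ hex.choose_spec.2)
    rw [Measure.map_apply hT (by
      have : {a : Γ → M | ∀ k ∈ J, a k ∈ B k} = ⋂ k ∈ (J : Set Γ),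
          (fun a : Γ → M => a k) ⁻¹' B k := by ext a; simp
      rw [this]
      exact MeasurableSet.biInter J.countable_toSet fun k _ =>
        measurable_pi_apply k (hBm k))]
    have hpre : (fun (a : Γ → M) k => a (π k)) ⁻¹' {a | ∀ k ∈ J, a k ∈ B k}
        = {a | ∀ j ∈ J.image π, a j ∈ B' j} := by
      ext a
      simp only [mem_preimage, mem_setOf_eq, Finset.mem_image]
      constructor
      · rintro h j ⟨k, hk, rfl⟩
        rw [hB'π k hk]
        exact h k hk
      · intro h k hk
        have := h (π k) ⟨k, hk, rfl⟩
        rwa [hB'π k hk] at this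
    rw [hpre, hμ _ B' hB'm, hμ _ _ hBm,
      Finset.prod_image (fun x _ y _ h => hπ h)]
    exact Finset.prod_congr rfl fun k hk => by rw [hB'π k hk]

end ErgAux2
end Aux2

section Helpers
variable {X : Type*} [MeasurableSpace X]

lemma ErgAux3.abs_toReal_measure_sub_le (ν : Measure X) [IsFiniteMeasure ν] (s t : Set X) :
    |(ν s).toReal - (ν t).toReal| ≤ (ν (s ∆ t)).toReal := by
  have key : ∀ u v : Set X, (ν u).toReal ≤ (ν v).toReal + (ν (u ∆ v)).toReal := by
    intro u v
    have h1 : ν u ≤ ν v + ν (u ∆ v) := by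
      refine le_trans (measure_mono fun x hx => ?_) (measure_union_le _ _)
      by_cases h : x ∈ v
      · exact Or.inl h
      · exact Or.inr (by simp [Set.mem_symmDiff, hx, h])
    have h2 := ENNReal.toReal_mono (by finiteness) h1
    rwa [ENNReal.toReal_add (measure_ne_top _ _) (measure_ne_top _ _)] at h2
  rw [abs_sub_le_iff]
  constructor
  · have := key s t; linarith
  · have := key t s; rw [symmDiff_comm] at this; linarith

lemma ErgAux3.inter_symmDiff_inter_subset (s t u v : Set X) :
    (s ∩ t) ∆ (u ∩ v) ⊆ (s ∆ u) ∪ (t ∆ v) := by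
  intro x hx
  simp only [Set.mem_symmDiff, Set.mem_inter_iff, Set.mem_union] at *
  tauto

end Helpers

/-- **Ergodicity of homogeneous product measures with respect to dispersive semigroups.**
Let `μ = p^{⊗Γ}` be the homogeneous product measure on `M^Γ` (characterized by its values
on cylinder sets) and let `Sg` be a dispersive semigroup of injective maps `Γ → Γ`
(for every finite `J ⊆ Γ` some `π ∈ Sg` has `π(J) ∩ J = ∅`).  Then every measurable
`E ⊆ M^Γ` invariant under the induced action of every `π ∈ Sg` has `μ(E) ∈ {0,1}`. -/
theorem product_measure_ergodic_dispersive
    {M Γ : Type*} [MeasurableSpace M] [Countable Γ]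
    (p : Measure M) [IsProbabilityMeasure p]
    (μ : Measure (Γ → M)) [IsProbabilityMeasure μ]
    (hμ : ∀ (J : Finset Γ) (B : Γ → Set M), (∀ k, MeasurableSet (B k)) →
      μ {a | ∀ k ∈ J, a k ∈ B k} = ∏ k ∈ J, p (B k))
    (Sg : Set (Γ → Γ))
    (hinj : ∀ π ∈ Sg, Function.Injective π)
    (hcomp : ∀ π ∈ Sg, ∀ π' ∈ Sg, π ∘ π' ∈ Sg)
    (hdisp : ∀ J : Finset Γ, ∃ π ∈ Sg, ∀ j ∈ J, π j ∉ J)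
    (E : Set (Γ → M)) (hE : MeasurableSet E)
    (hinv : ∀ π ∈ Sg, ∀ a : Γ → M, a ∈ E ↔ (fun k => a (π k)) ∈ E) :
    μ E = 0 ∨ μ E = 1 := by
  classical
  set x : ℝ := (μ E).toReal with hx
  -- approximation by measurable cylinders
  have halg : IsSetAlgebra (measurableCylinders (fun _ : Γ => M)) :=
    ⟨empty_mem_measurableCylinders _, fun s hs => compl_mem_measurableCylinders hs,
     fun s t hs ht => union_mem_measurableCylinders hs ht⟩
  have hdense : μ.MeasureDense (measurableCylinders (fun _ : Γ => M)) :=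
    Measure.MeasureDense.of_generateFrom_isSetAlgebra_finite (μ := μ) halg
      generateFrom_measurableCylinders.symm
  -- main estimate
  have key : ∀ ε : ℝ, 0 < ε → |x - x * x| ≤ 4 * ε := by
    intro ε hε
    obtain ⟨A, hAmem, hEA⟩ := hdense.approx E hE (measure_ne_top μ E) ε hε
    obtain ⟨J, S, hS, rfl⟩ := (mem_measurableCylinders A).mp hAmem
    obtain ⟨π, hπSg, hπJ⟩ := hdisp J
    set K : Finset Γ := J.image π with hK
    have hJK : Disjoint J K := Finset.disjoint_left.mpr fun {j} hj hjK => by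
      obtain ⟨i, hi, hij⟩ := Finset.mem_image.mp hjK
      exact hπJ i hi (hij ▸ hj)
    set T : (Γ → M) → (Γ → M) := fun a k => a (π k) with hTdef
    have hT : Measurable T := measurable_pi_lambda _ fun k => measurable_pi_apply (π k)
    have hmap : μ.map T = μ := ErgAux2.map_shift_eq p μ hμ (hinj π hπSg)
    have hTE : T ⁻¹' E = E := Set.ext fun a => (hinv π hπSg a).symm
    -- independence
    have hIndep : Indep (MeasurableSpace.generateFrom (ErgAux.boxes (M := M) J))
        (MeasurableSpace.generateFrom (ErgAux.boxes (M := M) K)) μ :=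
      IndepSets.indep (ErgAux.generateFrom_boxes_le J) (ErgAux.generateFrom_boxes_le K)
        (ErgAux.isPiSystem_boxes J) (ErgAux.isPiSystem_boxes K) rfl rfl
        (ErgAux2.indepSets_boxes p μ hμ hJK)
    have hAm1 : MeasurableSet[MeasurableSpace.generateFrom (ErgAux.boxes (M := M) J)]
        (cylinder J S) :=
      ErgAux.comap_le_generateFrom_boxes J _ ⟨S, hS, rfl⟩
    have hBm2 : MeasurableSet[MeasurableSpace.generateFrom (ErgAux.boxes (M := M) K)]
        (T ⁻¹' cylinder J S) := by
      refine ErgAux.comap_le_generateFrom_boxes K _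
        ⟨(fun (y : K → M) (j : J) => y ⟨π j, Finset.mem_image_of_mem π j.2⟩) ⁻¹' S,
          (measurable_pi_lambda _ fun j => measurable_pi_apply _) hS, rfl⟩
    have hmapA : μ (T ⁻¹' cylinder J S) = μ (cylinder J S) := by
      rw [← Measure.map_apply hT hS.cylinder, hmap]
    have hAA : μ (cylinder J S ∩ T ⁻¹' cylinder J S) = μ (cylinder J S) * μ (cylinder J S) := by
      rw [(hIndep.indepSet_of_measurableSet hAm1 hBm2).measure_inter_eq_mul, hmapA]
    -- numbers
    set a : ℝ := (μ (cylinder J S)).toReal with ha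
    have hEAle : (μ (E ∆ cylinder J S)).toReal ≤ ε := by
      have := ENNReal.toReal_mono ENNReal.ofReal_ne_top hEA.le
      rwa [ENNReal.toReal_ofReal hε.le] at this
    have h1 : |x - a| ≤ ε :=
      le_trans (ErgAux3.abs_toReal_measure_sub_le μ E (cylinder J S)) hEAle
    -- second estimate
    have hEinter : μ (E ∩ T ⁻¹' E) = μ E := by rw [hTE, Set.inter_self]
    have hsymm2 : μ ((E ∩ T ⁻¹' E) ∆ (cylinder J S ∩ T ⁻¹' cylinder J S))
        ≤ ENNReal.ofReal ε + ENNReal.ofReal ε := by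
      refine le_trans (measure_mono (ErgAux3.inter_symmDiff_inter_subset _ _ _ _)) ?_
      refine le_trans (measure_union_le _ _) ?_
      have hpre : μ ((T ⁻¹' E) ∆ (T ⁻¹' cylinder J S)) = μ (E ∆ cylinder J S) := by
        rw [← Set.preimage_symmDiff, ← Measure.map_apply hT (hE.symmDiff hS.cylinder), hmap]
      rw [hpre]
      exact add_le_add hEA.le hEA.le
    have h2 : |x - a * a| ≤ 2 * ε := by
      have habs := ErgAux3.abs_toReal_measure_sub_le μ (E ∩ T ⁻¹' E)
        (cylinder J S ∩ T ⁻¹' cylinder J S)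
      rw [hEinter, hAA, ENNReal.toReal_mul, ← hx, ← ha] at habs
      refine le_trans habs ?_
      have := ENNReal.toReal_mono (by finiteness) hsymm2
      rw [ENNReal.toReal_add ENNReal.ofReal_ne_top ENNReal.ofReal_ne_top,
        ENNReal.toReal_ofReal hε.le] at this
      linarith
    -- combine
    have hx1 : x ≤ 1 := by
      rw [hx]
      exact ENNReal.toReal_le_of_le_ofReal one_pos.le (by simpa using prob_le_one)
    have ha1 : a ≤ 1 := by
      rw [ha]
      exact ENNReal.toReal_le_of_le_ofReal one_pos.le (by simpa using prob_le_one)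
    have hx0 : 0 ≤ x := ENNReal.toReal_nonneg
    have ha0 : 0 ≤ a := ENNReal.toReal_nonneg
    have h3 : |a * a - x * x| ≤ 2 * ε := by
      have : a * a - x * x = (a + x) * (a - x) := by ring
      rw [this, abs_mul]
      have hab : |a + x| ≤ 2 := by rw [abs_of_nonneg (by linarith)]; linarith
      have hax : |a - x| ≤ ε := by rwa [abs_sub_comm] at h1
      exact mul_le_mul hab hax (abs_nonneg _) (by norm_num)
    calc |x - x * x| ≤ |x - a * a| + |a * a - x * x| := abs_sub_le _ _ _
      _ ≤ 2 * ε + 2 * ε := add_le_add h2 h3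
      _ = 4 * ε := by ring
  -- conclude x = x * x
  have hxx : x = x * x := by
    by_contra h
    have hδ : 0 < |x - x * x| := abs_pos.mpr (sub_ne_zero.mpr h)
    have := key (|x - x * x| / 8) (by linarith)
    linarith
  have hx01 : x * (1 - x) = 0 := by nlinarith [hxx]
  rcases mul_eq_zero.mp hx01 with h0 | h1
  · left
    rcases (ENNReal.toReal_eq_zero_iff _).mp h0 with h | h
    · exact h
    · exact absurd h (measure_ne_top μ E)
  · right
    have : x = 1 := by linarith
    have := (ENNReal.toReal_eq_toReal_iff' (measure_ne_top μ E) ENNReal.one_ne_top).mp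
      (by simpa using this)
    exact this
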